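/- arXiv:2509.13923 — 2 statements merged into one kernel-verified Lean document; each statement's English description precedes it below -/
import Mathlib

section
/- Let n ≥ 1, t_out ≥ 1, let Σ be a deterministic symmetric positive semidefinite n×n matrix, and let E_out = (1/t_out)·√Σ X Xᵀ √Σ where the t_out columns of X are i.i.d. copies of a rotationally invariant random vector ξ in ℝⁿ with E[ξξᵀ] = Iₙ and E[‖ξ‖⁴] < ∞; set γ = E[‖ξ‖⁴]/(n(n+2)). Let V be a random n×n orthogonal matrix independent of X, and define the holdout estimator Ξᴴ = V · Diag(Vᵀ E_out V) · Vᵀ. Then the expected normalized Frobenius error satisfies E[τ((Ξᴴ − Σ)²)] = ((3γ − 1)/t_out − 1) · E[τ(Diag(Vᵀ Σ V)²)] + τ(Σ²). (In the paper's notation, with total sample size t and train–test ratio k = t/t_out, the prefactor is (k/t)(3γ − 1) − 1.) -/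
open MeasureTheory ProbabilityTheory Matrix

/-- Normalized trace `τ(A) = (1/n)·Tr(A)`. -/
noncomputable def tau (n : ℕ) (A : Matrix (Fin n) (Fin n) ℝ) : ℝ := (1 / (n : ℝ)) * A.trace

/-- `Diag(A)`: the diagonal matrix obtained from `A` by zeroing out off-diagonal entries. -/
def diagPart (n : ℕ) (A : Matrix (Fin n) (Fin n) ℝ) : Matrix (Fin n) (Fin n) ℝ :=
  Matrix.diagonal A.diag

/-- Matrices carry the product measurable structure. -/
instance matrixMeasurableSpace {m k α : Type*} [MeasurableSpace α] :
    MeasurableSpace (Matrix m k α) :=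
  inferInstanceAs (MeasurableSpace (m → k → α))

set_option linter.unusedSectionVars false

section AuxStmt9

section Part1
variable {Ω : Type*} [MeasurableSpace Ω] {μ : Measure Ω} [IsProbabilityMeasure μ]
variable {n : ℕ} {ξ : Ω → Fin n → ℝ}

/-- quartic monomial in coordinates of ξ -/
def q4 (ξ : Ω → Fin n → ℝ) (a b c d : Fin n) : Ω → ℝ :=
  fun ω => ξ ω a * ξ ω b * ξ ω c * ξ ω d

lemma meas_coord (hξ : Measurable ξ) (a : Fin n) : Measurable fun ω => ξ ω a :=
  (measurable_pi_apply a).comp hξ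

lemma q4_meas (hξ : Measurable ξ) (a b c d : Fin n) : Measurable (q4 ξ a b c d) :=
  (((meas_coord hξ a).mul (meas_coord hξ b)).mul (meas_coord hξ c)).mul (meas_coord hξ d)

lemma abs_quartic_le (x : Fin n → ℝ) (a b c d : Fin n) :
    |x a * x b * x c * x d| ≤ (∑ i, x i ^ 2) ^ 2 := by
  have hs : ∀ e : Fin n, x e ^ 2 ≤ ∑ i, x i ^ 2 := fun e =>
    Finset.single_le_sum (fun i _ => sq_nonneg (x i)) (Finset.mem_univ e)
  have h1 : |x a * x b| ≤ ∑ i, x i ^ 2 := by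
    rw [abs_mul]
    nlinarith [hs a, hs b, sq_abs (x a), sq_abs (x b), abs_nonneg (x a), abs_nonneg (x b),
      sq_nonneg (|x a| - |x b|)]
  have h2 : |x c * x d| ≤ ∑ i, x i ^ 2 := by
    rw [abs_mul]
    nlinarith [hs c, hs d, sq_abs (x c), sq_abs (x d), abs_nonneg (x c), abs_nonneg (x d),
      sq_nonneg (|x c| - |x d|)]
  have h0 : (0:ℝ) ≤ |x a * x b| := abs_nonneg _
  calc |x a * x b * x c * x d| = |x a * x b| * |x c * x d| := by
        rw [← abs_mul]; ring_nf
    _ ≤ (∑ i, x i ^ 2) * (∑ i, x i ^ 2) := mul_le_mul h1 h2 (abs_nonneg _)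
        (le_trans h0 h1)
    _ = (∑ i, x i ^ 2) ^ 2 := (sq _).symm

lemma q4_integrable (hξ : Measurable ξ)
    (hmom4 : Integrable (fun ω => (∑ i, ξ ω i ^ 2) ^ 2) μ) (a b c d : Fin n) :
    Integrable (q4 ξ a b c d) μ := by
  refine Integrable.mono' hmom4 (q4_meas hξ a b c d).aestronglyMeasurable ?_
  filter_upwards with ω
  rw [Real.norm_eq_abs]
  exact abs_quartic_le (ξ ω) a b c d

lemma rot_integral (hξ : Measurable ξ)
    (hrot : ∀ O : Matrix (Fin n) (Fin n) ℝ, Oᵀ * O = 1 →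
      Measure.map (fun ω => O.mulVec (ξ ω)) μ = Measure.map ξ μ)
    {O : Matrix (Fin n) (Fin n) ℝ} (hO : Oᵀ * O = 1)
    {g : (Fin n → ℝ) → ℝ} (hg : Measurable g) :
    ∫ ω, g (O.mulVec (ξ ω)) ∂μ = ∫ ω, g (ξ ω) ∂μ := by
  have h1 : Measurable fun ω => O.mulVec (ξ ω) := by
    apply measurable_pi_lambda
    intro i
    simp only [Matrix.mulVec, dotProduct]
    exact Finset.measurable_sum _ fun j _ => measurable_const.mul (meas_coord hξ j)
  rw [← integral_map h1.aemeasurable hg.aestronglyMeasurable, hrot O hO,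
    integral_map hξ.aemeasurable hg.aestronglyMeasurable]

lemma flip_sign (hξ : Measurable ξ)
    (hrot : ∀ O : Matrix (Fin n) (Fin n) ℝ, Oᵀ * O = 1 →
      Measure.map (fun ω => O.mulVec (ξ ω)) μ = Measure.map ξ μ)
    (j a b c d : Fin n) :
    ∫ ω, q4 ξ a b c d ω ∂μ =
      ((if a = j then (-1:ℝ) else 1) * (if b = j then (-1:ℝ) else 1) *
       (if c = j then (-1:ℝ) else 1) * (if d = j then (-1:ℝ) else 1)) *
      ∫ ω, q4 ξ a b c d ω ∂μ := by
  set e : Fin n → ℝ := fun i => if i = j then -1 else 1 with he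
  have hO : (Matrix.diagonal e)ᵀ * Matrix.diagonal e = 1 := by
    rw [Matrix.diagonal_transpose, Matrix.diagonal_mul_diagonal]
    have : (fun i => e i * e i) = fun _ => (1:ℝ) := by
      funext i
      simp only [he]
      by_cases h : i = j <;> simp [h]
    rw [this, Matrix.diagonal_one]
  have hg : Measurable fun x : Fin n → ℝ => x a * x b * x c * x d :=
    (((measurable_pi_apply a).mul (measurable_pi_apply b)).mul
      (measurable_pi_apply c)).mul (measurable_pi_apply d)
  have h := rot_integral hξ hrot hO hg
  have heq : (fun ω => (Matrix.diagonal e).mulVec (ξ ω) a * (Matrix.diagonal e).mulVec (ξ ω) b *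
      (Matrix.diagonal e).mulVec (ξ ω) c * (Matrix.diagonal e).mulVec (ξ ω) d) =
      fun ω => (e a * e b * e c * e d) * q4 ξ a b c d ω := by
    funext ω
    simp only [Matrix.mulVec_diagonal, q4]
    ring
  rw [heq, MeasureTheory.integral_const_mul] at h
  have hq : (∫ ω, ξ ω a * ξ ω b * ξ ω c * ξ ω d ∂μ) = ∫ ω, q4 ξ a b c d ω ∂μ := rfl
  rw [hq] at h
  have := h.symm
  calc ∫ ω, q4 ξ a b c d ω ∂μ = e a * e b * e c * e d * ∫ ω, q4 ξ a b c d ω ∂μ := this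
    _ = ((if a = j then (-1:ℝ) else 1) * (if b = j then (-1:ℝ) else 1) *
       (if c = j then (-1:ℝ) else 1) * (if d = j then (-1:ℝ) else 1)) *
      ∫ ω, q4 ξ a b c d ω ∂μ := by simp [he]

lemma flip_zero (hξ : Measurable ξ)
    (hrot : ∀ O : Matrix (Fin n) (Fin n) ℝ, Oᵀ * O = 1 →
      Measure.map (fun ω => O.mulVec (ξ ω)) μ = Measure.map ξ μ)
    {j a b c d : Fin n}
    (hsign : ((if a = j then (-1:ℝ) else 1) * (if b = j then (-1:ℝ) else 1) *
       (if c = j then (-1:ℝ) else 1) * (if d = j then (-1:ℝ) else 1)) = -1) :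
    ∫ ω, q4 ξ a b c d ω ∂μ = 0 := by
  have h := flip_sign hξ hrot j a b c d
  rw [hsign] at h
  linarith

end Part1

section Rot45
variable {n : ℕ}

/-- 45-degree rotation in the (j,k) plane. -/
noncomputable def rot45 (j k : Fin n) : Matrix (Fin n) (Fin n) ℝ :=
  Matrix.of fun p q =>
    if p = j then (if q = j then (Real.sqrt 2)⁻¹ else if q = k then (Real.sqrt 2)⁻¹ else 0)
    else if p = k then (if q = j then (Real.sqrt 2)⁻¹ else if q = k then -(Real.sqrt 2)⁻¹ else 0)
    else (if q = p then 1 else 0)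

lemma sqrt2_inv_sq : ((Real.sqrt 2)⁻¹ : ℝ) * (Real.sqrt 2)⁻¹ = 1/2 := by
  rw [← mul_inv, Real.mul_self_sqrt (by norm_num : (0:ℝ) ≤ 2)]
  norm_num

lemma rot45_orth {j k : Fin n} (hjk : j ≠ k) : (rot45 j k)ᵀ * rot45 j k = 1 := by
  ext p q
  rw [Matrix.mul_apply]
  simp only [Matrix.transpose_apply]
  have hjmem : j ∈ Finset.univ := Finset.mem_univ j
  rw [Finset.sum_eq_add_sum_sdiff_singleton_of_mem hjmem (fun i => rot45 j k i p * rot45 j k i q)]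
  have hkmem : k ∈ Finset.univ \ {j} := by simp [hjk.symm]
  rw [Finset.sum_eq_add_sum_sdiff_singleton_of_mem hkmem (fun i => rot45 j k i p * rot45 j k i q)]
  have hrest : ∑ i ∈ (Finset.univ \ {j}) \ {k}, rot45 j k i p * rot45 j k i q
      = if p = q ∧ p ≠ j ∧ p ≠ k then 1 else 0 := by
    have hcongr : ∀ i ∈ (Finset.univ \ {j}) \ {k},
        rot45 j k i p * rot45 j k i q
          = if p = i then (if q = i then (1:ℝ) else 0) else 0 := by
      intro i hi
      simp only [Finset.mem_sdiff, Finset.mem_singleton, Finset.mem_univ, true_and] at hi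
      simp only [rot45, Matrix.of_apply, hi.1, hi.2, if_false]
      by_cases h1 : p = i <;> by_cases h2 : q = i <;> simp [h1, h2]
    rw [Finset.sum_congr rfl hcongr, Finset.sum_ite_eq]
    by_cases hm : p ∈ (Finset.univ \ {j}) \ {k}
    · rw [if_pos hm]
      simp only [Finset.mem_sdiff, Finset.mem_singleton, Finset.mem_univ, true_and] at hm
      simp only [hm.1, hm.2, ne_eq, not_false_iff, and_true]
      by_cases h : p = q
      · simp [h]
      · simp [h, Ne.symm h]
    · rw [if_neg hm]
      simp only [Finset.mem_sdiff, Finset.mem_singleton, Finset.mem_univ, true_and,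
        not_and_or, not_not] at hm
      rcases hm with hm | hm <;> subst hm <;> simp
  rw [hrest]
  simp only [Matrix.one_apply]
  by_cases hpq : p = q
  · subst hpq
    by_cases hp1 : p = j
    · subst hp1
      simp [rot45, hjk, Ne.symm hjk, sqrt2_inv_sq]
      norm_num
    · by_cases hp2 : p = k
      · subst hp2
        simp [rot45, hjk, Ne.symm hjk, hp1, sqrt2_inv_sq]
        try norm_num
      · simp [rot45, hp1, hp2]
  · by_cases hp1 : p = j <;> by_cases hq1 : q = j <;> by_cases hp2 : p = k
      <;> by_cases hq2 : q = k <;> simp_all [rot45] <;> ring_nf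

lemma rot45_mulVec {j k : Fin n} (hjk : j ≠ k) (x : Fin n → ℝ) :
    ((rot45 j k).mulVec x j = (Real.sqrt 2)⁻¹ * x j + (Real.sqrt 2)⁻¹ * x k)
    ∧ ((rot45 j k).mulVec x k = (Real.sqrt 2)⁻¹ * x j - (Real.sqrt 2)⁻¹ * x k) := by
  constructor
  · rw [Matrix.mulVec, dotProduct]
    have hjmem : j ∈ Finset.univ := Finset.mem_univ j
    rw [Finset.sum_eq_add_sum_sdiff_singleton_of_mem hjmem (fun q => rot45 j k j q * x q)]
    have hkmem : k ∈ Finset.univ \ {j} := by simp [hjk.symm]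
    rw [Finset.sum_eq_add_sum_sdiff_singleton_of_mem hkmem (fun q => rot45 j k j q * x q)]
    have hrest : ∑ q ∈ (Finset.univ \ {j}) \ {k}, rot45 j k j q * x q = 0 := by
      apply Finset.sum_eq_zero
      intro q hq
      simp only [Finset.mem_sdiff, Finset.mem_singleton, Finset.mem_univ, true_and] at hq
      simp [rot45, hq.1, hq.2]
    rw [hrest]
    simp [rot45, hjk, Ne.symm hjk]
  · rw [Matrix.mulVec, dotProduct]
    have hjmem : j ∈ Finset.univ := Finset.mem_univ j
    rw [Finset.sum_eq_add_sum_sdiff_singleton_of_mem hjmem (fun q => rot45 j k k q * x q)]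
    have hkmem : k ∈ Finset.univ \ {j} := by simp [hjk.symm]
    rw [Finset.sum_eq_add_sum_sdiff_singleton_of_mem hkmem (fun q => rot45 j k k q * x q)]
    have hrest : ∑ q ∈ (Finset.univ \ {j}) \ {k}, rot45 j k k q * x q = 0 := by
      apply Finset.sum_eq_zero
      intro q hq
      simp only [Finset.mem_sdiff, Finset.mem_singleton, Finset.mem_univ, true_and] at hq
      simp [rot45, hq.1, hq.2]
    rw [hrest]
    simp [rot45, hjk, Ne.symm hjk]
    ring

end Rot45

section Moments
variable {Ω : Type*} [MeasurableSpace Ω] {μ : Measure Ω} [IsProbabilityMeasure μ]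
variable {n : ℕ} {ξ : Ω → Fin n → ℝ}

lemma pair_moments (hξ : Measurable ξ)
    (hrot : ∀ O : Matrix (Fin n) (Fin n) ℝ, Oᵀ * O = 1 →
      Measure.map (fun ω => O.mulVec (ξ ω)) μ = Measure.map ξ μ)
    (hmom4 : Integrable (fun ω => (∑ i, ξ ω i ^ 2) ^ 2) μ)
    {j k : Fin n} (hjk : j ≠ k) :
    (∫ ω, q4 ξ j j j j ω ∂μ = ∫ ω, q4 ξ k k k k ω ∂μ)
    ∧ (∫ ω, q4 ξ j j k k ω ∂μ = (∫ ω, q4 ξ j j j j ω ∂μ) / 3) := by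
  set c : ℝ := (Real.sqrt 2)⁻¹ with hc
  have i1 := q4_integrable hξ hmom4 j j j j
  have i2 := q4_integrable hξ hmom4 j j j k
  have i3 := q4_integrable hξ hmom4 j j k k
  have i4 := q4_integrable hξ hmom4 j k k k
  have i5 := q4_integrable hξ hmom4 k k k k
  have hz2 : ∫ ω, q4 ξ j j j k ω ∂μ = 0 := by
    apply flip_zero hξ hrot (j := k)
    simp [hjk]
  have hz4 : ∫ ω, q4 ξ j k k k ω ∂μ = 0 := by
    apply flip_zero hξ hrot (j := j)
    simp [hjk.symm]
  -- expansion of (c u + c v)^4 and (c u - c v)^4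
  have hgj : Measurable fun x : Fin n → ℝ => x j * x j * x j * x j :=
    (((measurable_pi_apply j).mul (measurable_pi_apply j)).mul
      (measurable_pi_apply j)).mul (measurable_pi_apply j)
  have hgk : Measurable fun x : Fin n → ℝ => x k * x k * x k * x k :=
    (((measurable_pi_apply k).mul (measurable_pi_apply k)).mul
      (measurable_pi_apply k)).mul (measurable_pi_apply k)
  have hA := rot_integral hξ hrot (rot45_orth hjk) hgj
  have hB := rot_integral hξ hrot (rot45_orth hjk) hgk
  have hrwA : (fun ω => (rot45 j k).mulVec (ξ ω) j * (rot45 j k).mulVec (ξ ω) j *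
      (rot45 j k).mulVec (ξ ω) j * (rot45 j k).mulVec (ξ ω) j)
      = fun ω => ((1/4:ℝ) * q4 ξ j j j j ω + q4 ξ j j j k ω) + ((3/2) * q4 ξ j j k k ω
          + q4 ξ j k k k ω) + (1/4) * q4 ξ k k k k ω := by
    funext ω
    rw [(rot45_mulVec hjk (ξ ω)).1]
    simp only [q4]
    linear_combination ((c * c + 1/2) * (ξ ω j + ξ ω k)^4) * sqrt2_inv_sq
  have hrwB : (fun ω => (rot45 j k).mulVec (ξ ω) k * (rot45 j k).mulVec (ξ ω) k *
      (rot45 j k).mulVec (ξ ω) k * (rot45 j k).mulVec (ξ ω) k)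
      = fun ω => ((1/4:ℝ) * q4 ξ j j j j ω + (-1) * q4 ξ j j j k ω) + ((3/2) * q4 ξ j j k k ω
          + (-1) * q4 ξ j k k k ω) + (1/4) * q4 ξ k k k k ω := by
    funext ω
    rw [(rot45_mulVec hjk (ξ ω)).2]
    simp only [q4]
    linear_combination ((c * c + 1/2) * (ξ ω j - ξ ω k)^4) * sqrt2_inv_sq
  rw [hrwA] at hA
  rw [hrwB] at hB
  have g1 : Integrable (fun ω => (1/4:ℝ) * q4 ξ j j j j ω) μ := i1.const_mul _
  have g3 : Integrable (fun ω => (3/2:ℝ) * q4 ξ j j k k ω) μ := i3.const_mul _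
  have g5 : Integrable (fun ω => (1/4:ℝ) * q4 ξ k k k k ω) μ := i5.const_mul _
  have g2m : Integrable (fun ω => (-1:ℝ) * q4 ξ j j j k ω) μ := i2.const_mul _
  have g4m : Integrable (fun ω => (-1:ℝ) * q4 ξ j k k k ω) μ := i4.const_mul _
  have g12 : Integrable (fun ω => (1/4:ℝ) * q4 ξ j j j j ω + q4 ξ j j j k ω) μ := g1.add i2
  have g34 : Integrable (fun ω => (3/2:ℝ) * q4 ξ j j k k ω + q4 ξ j k k k ω) μ := g3.add i4
  have g1234 : Integrable (fun ω => ((1/4:ℝ) * q4 ξ j j j j ω + q4 ξ j j j k ω)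
      + ((3/2:ℝ) * q4 ξ j j k k ω + q4 ξ j k k k ω)) μ := g12.add g34
  have g12' : Integrable (fun ω => (1/4:ℝ) * q4 ξ j j j j ω + (-1:ℝ) * q4 ξ j j j k ω) μ :=
    g1.add g2m
  have g34' : Integrable (fun ω => (3/2:ℝ) * q4 ξ j j k k ω + (-1:ℝ) * q4 ξ j k k k ω) μ :=
    g3.add g4m
  have g1234' : Integrable (fun ω => ((1/4:ℝ) * q4 ξ j j j j ω + (-1:ℝ) * q4 ξ j j j k ω)
      + ((3/2:ℝ) * q4 ξ j j k k ω + (-1:ℝ) * q4 ξ j k k k ω)) μ := g12'.add g34'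
  rw [integral_add g1234 g5, integral_add g12 g34, integral_add g1 i2, integral_add g3 i4,
    integral_const_mul, integral_const_mul, integral_const_mul] at hA
  rw [integral_add g1234' g5, integral_add g12' g34', integral_add g1 g2m, integral_add g3 g4m,
    integral_const_mul, integral_const_mul, integral_const_mul, integral_const_mul,
    integral_const_mul] at hB
  rw [hz2, hz4] at hA hB
  have hq1 : (∫ ω, ξ ω j * ξ ω j * ξ ω j * ξ ω j ∂μ) = ∫ ω, q4 ξ j j j j ω ∂μ := rfl
  have hq5 : (∫ ω, ξ ω k * ξ ω k * ξ ω k * ξ ω k ∂μ) = ∫ ω, q4 ξ k k k k ω ∂μ := rfl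
  rw [hq1] at hA
  rw [hq5] at hB
  constructor
  · linarith
  · linarith

lemma m4_p_val (hn : 1 ≤ n) (hξ : Measurable ξ)
    (hrot : ∀ O : Matrix (Fin n) (Fin n) ℝ, Oᵀ * O = 1 →
      Measure.map (fun ω => O.mulVec (ξ ω)) μ = Measure.map ξ μ)
    (hmom4 : Integrable (fun ω => (∑ i, ξ ω i ^ 2) ^ 2) μ)
    {γ : ℝ} (hγ : γ = (∫ ω, (∑ i, ξ ω i ^ 2) ^ 2 ∂μ) / ((n : ℝ) * ((n : ℝ) + 2))) :
    (∀ a : Fin n, ∫ ω, q4 ξ a a a a ω ∂μ = 3 * γ)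
    ∧ (∀ a b : Fin n, a ≠ b → ∫ ω, q4 ξ a a b b ω ∂μ = γ) := by
  have hnpos : (0:ℝ) < n := by exact_mod_cast hn
  set z : Fin n := ⟨0, hn⟩ with hz
  set m : ℝ := ∫ ω, q4 ξ z z z z ω ∂μ with hm
  have hconst : ∀ a : Fin n, ∫ ω, q4 ξ a a a a ω ∂μ = m := by
    intro a
    by_cases ha : a = z
    · rw [ha]
    · exact (pair_moments hξ hrot hmom4 ha).1
  have hpair : ∀ a b : Fin n, a ≠ b → ∫ ω, q4 ξ a a b b ω ∂μ = m / 3 := by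
    intro a b hab
    rw [(pair_moments hξ hrot hmom4 hab).2, hconst a]
  -- total sum identity
  have hptw : (fun ω => (∑ i, ξ ω i ^ 2) ^ 2) = fun ω => ∑ a, ∑ b, q4 ξ a a b b ω := by
    funext ω
    rw [sq, Finset.sum_mul_sum]
    exact Finset.sum_congr rfl fun a _ => Finset.sum_congr rfl fun b _ => by
      simp only [q4]; ring
  have hsum : ∫ ω, (∑ i, ξ ω i ^ 2) ^ 2 ∂μ = ∑ a, ∑ b, ∫ ω, q4 ξ a a b b ω ∂μ := by
    rw [hptw, integral_finset_sum _ fun a _ =>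
      integrable_finset_sum _ fun b _ => q4_integrable hξ hmom4 a a b b]
    exact Finset.sum_congr rfl fun a _ => integral_finset_sum _ fun b _ =>
      q4_integrable hξ hmom4 a a b b
  have hval : ∀ a : Fin n, ∑ b, ∫ ω, q4 ξ a a b b ω ∂μ = (n:ℝ) * (m/3) + (m - m/3) := by
    intro a
    have : ∀ b ∈ Finset.univ, ∫ ω, q4 ξ a a b b ω ∂μ
        = m/3 + (if a = b then m - m/3 else 0) := by
      intro b _
      by_cases hab : a = b
      · rw [← hab, hconst a, if_pos rfl]; ring
      · rw [hpair a b hab, if_neg hab]; ring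
    rw [Finset.sum_congr rfl this, Finset.sum_add_distrib, Finset.sum_const,
      Finset.sum_ite_eq, if_pos (Finset.mem_univ a), Finset.card_univ, Fintype.card_fin,
      nsmul_eq_mul]
  have htot : ∫ ω, (∑ i, ξ ω i ^ 2) ^ 2 ∂μ = (n:ℝ) * ((n:ℝ) * (m/3) + (m - m/3)) := by
    rw [hsum, Finset.sum_congr rfl fun a _ => hval a, Finset.sum_const, Finset.card_univ,
      Fintype.card_fin, nsmul_eq_mul]
  have hγm : γ = m / 3 := by
    rw [hγ, htot]
    field_simp
    ring
  constructor
  · intro a; rw [hconst a, hγm]; ring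
  · intro a b hab; rw [hpair a b hab, hγm]

lemma moment4 (hn : 1 ≤ n) (hξ : Measurable ξ)
    (hrot : ∀ O : Matrix (Fin n) (Fin n) ℝ, Oᵀ * O = 1 →
      Measure.map (fun ω => O.mulVec (ξ ω)) μ = Measure.map ξ μ)
    (hmom4 : Integrable (fun ω => (∑ i, ξ ω i ^ 2) ^ 2) μ)
    {γ : ℝ} (hγ : γ = (∫ ω, (∑ i, ξ ω i ^ 2) ^ 2 ∂μ) / ((n : ℝ) * ((n : ℝ) + 2)))
    (a b c d : Fin n) :
    ∫ ω, q4 ξ a b c d ω ∂μ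
      = γ * ((if a = b then (1:ℝ) else 0) * (if c = d then (1:ℝ) else 0)
        + (if a = c then (1:ℝ) else 0) * (if b = d then (1:ℝ) else 0)
        + (if a = d then (1:ℝ) else 0) * (if b = c then (1:ℝ) else 0)) := by
  obtain ⟨hm4, hp⟩ := m4_p_val hn hξ hrot hmom4 hγ
  by_cases hab : a = b
  · subst hab
    by_cases hcd : c = d
    · subst hcd
      by_cases hac : a = c
      · subst hac
        rw [hm4 a]; simp; ring
      · rw [hp a c hac]; simp [hac]
    · have hz : ∫ ω, q4 ξ a a c d ω ∂μ = 0 := by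
        apply flip_zero hξ hrot (j := c)
        have hdc : ¬ d = c := fun h => hcd (h.symm)
        by_cases hac : a = c <;> simp [hac, hdc]
      rw [hz]
      by_cases hac : a = c <;> by_cases had : a = d <;> simp_all
  · by_cases hac : a = c
    · subst hac
      by_cases hbd : b = d
      · subst hbd
        have hq : (∫ ω, q4 ξ a b a b ω ∂μ) = ∫ ω, q4 ξ a a b b ω ∂μ := by
          apply integral_congr_ae
          filter_upwards with ω
          simp only [q4]; ring
        rw [hq, hp a b hab]
        have hba : ¬ b = a := fun h => hab h.symm
        simp [hab, hba]
      · have hz : ∫ ω, q4 ξ a b a d ω ∂μ = 0 := by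
          apply flip_zero hξ hrot (j := b)
          have hab' : ¬ a = b := hab
          have hdb : ¬ d = b := fun h => hbd (h.symm)
          simp [hab', hdb]
        rw [hz]
        have hba : ¬ b = a := fun h => hab h.symm
        have hdb : ¬ d = b := fun h => hbd h.symm
        simp [hab, hbd, hba, hdb]
    · by_cases had : a = d
      · subst had
        by_cases hbc : b = c
        · subst hbc
          have hq : (∫ ω, q4 ξ a b b a ω ∂μ) = ∫ ω, q4 ξ a a b b ω ∂μ := by
            apply integral_congr_ae
            filter_upwards with ω
            simp only [q4]; ring
          rw [hq, hp a b hab]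
          have hba : ¬ b = a := fun h => hab h.symm
          simp [hab, hba]
        · have hz : ∫ ω, q4 ξ a b c a ω ∂μ = 0 := by
            apply flip_zero hξ hrot (j := b)
            have hab' : ¬ a = b := hab
            have hcb : ¬ c = b := fun h => hbc (h.symm)
            simp [hab', hcb]
          rw [hz]
          have hba : ¬ b = a := fun h => hab h.symm
          have hca : ¬ c = a := fun h => hac h.symm
          have hcb : ¬ c = b := fun h => hbc h.symm
          simp [hab, hac, hbc, hba, hca, hcb]
      · have hz : ∫ ω, q4 ξ a b c d ω ∂μ = 0 := by
          apply flip_zero hξ hrot (j := a)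
          have hba : ¬ b = a := fun h => hab h.symm
          have hca : ¬ c = a := fun h => hac h.symm
          have hda : ¬ d = a := fun h => had h.symm
          simp [hba, hca, hda]
        rw [hz]
        have hba : ¬ b = a := fun h => hab h.symm
        have hca : ¬ c = a := fun h => hac h.symm
        have hda : ¬ d = a := fun h => had h.symm
        simp [hab, hac, had, hba, hca, hda]

end Moments

section XMoments
variable {Ω : Type*} [MeasurableSpace Ω] {μ : Measure Ω} [IsProbabilityMeasure μ]
variable {n tout : ℕ} {ξ : Ω → Fin n → ℝ} {X : Ω → Matrix (Fin n) (Fin tout) ℝ}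

lemma g2_meas (a b : Fin n) : Measurable fun x : Fin n → ℝ => x a * x b :=
  (measurable_pi_apply a).mul (measurable_pi_apply b)

lemma g4_meas (a b c d : Fin n) : Measurable fun x : Fin n → ℝ => x a * x b * x c * x d :=
  (((measurable_pi_apply a).mul (measurable_pi_apply b)).mul
    (measurable_pi_apply c)).mul (measurable_pi_apply d)

lemma xi2_integrable (hξ : Measurable ξ)
    (hmom4 : Integrable (fun ω => (∑ i, ξ ω i ^ 2) ^ 2) μ) (a b : Fin n) :
    Integrable (fun ω => ξ ω a * ξ ω b) μ := by
  refine Integrable.mono' (hmom4.add (integrable_const 1))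
    ((meas_coord hξ a).mul (meas_coord hξ b)).aestronglyMeasurable ?_
  filter_upwards with ω
  rw [Real.norm_eq_abs]
  have hs : ∀ e : Fin n, ξ ω e ^ 2 ≤ ∑ i, ξ ω i ^ 2 := fun e =>
    Finset.single_le_sum (fun i _ => sq_nonneg (ξ ω i)) (Finset.mem_univ e)
  have h1 : |ξ ω a * ξ ω b| ≤ ∑ i, ξ ω i ^ 2 := by
    rw [abs_mul]
    nlinarith [hs a, hs b, sq_abs (ξ ω a), sq_abs (ξ ω b), abs_nonneg (ξ ω a),
      abs_nonneg (ξ ω b), sq_nonneg (|ξ ω a| - |ξ ω b|)]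
  have h2 : (∑ i, ξ ω i ^ 2) ≤ (∑ i, ξ ω i ^ 2) ^ 2 + 1 := by
    nlinarith [sq_nonneg ((∑ i, ξ ω i ^ 2) - 1)]
  exact le_trans h1 h2

lemma X2_moment (hξ : Measurable ξ)
    (hcov : ∀ i j : Fin n, ∫ ω, ξ ω i * ξ ω j ∂μ = if i = j then (1 : ℝ) else 0)
    (hident : ∀ t : Fin tout, IdentDistrib (fun ω => fun i => X ω i t) ξ μ μ)
    (s : Fin tout) (a b : Fin n) :
    ∫ ω, X ω a s * X ω b s ∂μ = if a = b then (1:ℝ) else 0 := by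
  have h := ((hident s).comp (g2_meas a b)).integral_eq
  exact h.trans (hcov a b)

lemma X2_integrable (hξ : Measurable ξ)
    (hmom4 : Integrable (fun ω => (∑ i, ξ ω i ^ 2) ^ 2) μ)
    (hident : ∀ t : Fin tout, IdentDistrib (fun ω => fun i => X ω i t) ξ μ μ)
    (s : Fin tout) (a b : Fin n) :
    Integrable (fun ω => X ω a s * X ω b s) μ :=
  (((hident s).comp (g2_meas a b)).integrable_iff).mpr (xi2_integrable hξ hmom4 a b)

lemma X4_moment_same (hn : 1 ≤ n) (hξ : Measurable ξ)
    (hrot : ∀ O : Matrix (Fin n) (Fin n) ℝ, Oᵀ * O = 1 →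
      Measure.map (fun ω => O.mulVec (ξ ω)) μ = Measure.map ξ μ)
    (hmom4 : Integrable (fun ω => (∑ i, ξ ω i ^ 2) ^ 2) μ)
    {γ : ℝ} (hγ : γ = (∫ ω, (∑ i, ξ ω i ^ 2) ^ 2 ∂μ) / ((n : ℝ) * ((n : ℝ) + 2)))
    (hident : ∀ t : Fin tout, IdentDistrib (fun ω => fun i => X ω i t) ξ μ μ)
    (s : Fin tout) (a b c d : Fin n) :
    ∫ ω, X ω a s * X ω b s * X ω c s * X ω d s ∂μ
      = γ * ((if a = b then (1:ℝ) else 0) * (if c = d then (1:ℝ) else 0)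
        + (if a = c then (1:ℝ) else 0) * (if b = d then (1:ℝ) else 0)
        + (if a = d then (1:ℝ) else 0) * (if b = c then (1:ℝ) else 0)) := by
  have h := ((hident s).comp (g4_meas a b c d)).integral_eq
  exact h.trans (moment4 hn hξ hrot hmom4 hγ a b c d)

lemma X4_integrable_same (hξ : Measurable ξ)
    (hmom4 : Integrable (fun ω => (∑ i, ξ ω i ^ 2) ^ 2) μ)
    (hident : ∀ t : Fin tout, IdentDistrib (fun ω => fun i => X ω i t) ξ μ μ)
    (s : Fin tout) (a b c d : Fin n) :
    Integrable (fun ω => X ω a s * X ω b s * X ω c s * X ω d s) μ :=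
  (((hident s).comp (g4_meas a b c d)).integrable_iff).mpr (q4_integrable hξ hmom4 a b c d)

lemma X4_moment_cross (hξ : Measurable ξ)
    (hcov : ∀ i j : Fin n, ∫ ω, ξ ω i * ξ ω j ∂μ = if i = j then (1 : ℝ) else 0)
    (hmom4 : Integrable (fun ω => (∑ i, ξ ω i ^ 2) ^ 2) μ)
    (hindep : iIndepFun
      (fun t ω => fun i => X ω i t) μ)
    (hident : ∀ t : Fin tout, IdentDistrib (fun ω => fun i => X ω i t) ξ μ μ)
    {s s' : Fin tout} (hss' : s ≠ s') (a b c d : Fin n) :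
    ∫ ω, (X ω a s * X ω b s) * (X ω c s' * X ω d s') ∂μ
      = (if a = b then (1:ℝ) else 0) * (if c = d then (1:ℝ) else 0) := by
  have hind : IndepFun (fun ω => X ω a s * X ω b s) (fun ω => X ω c s' * X ω d s') μ :=
    (hindep.indepFun hss').comp (g2_meas a b) (g2_meas c d)
  have h := hind.integral_mul_eq_mul_integral (X2_integrable hξ hmom4 hident s a b).aestronglyMeasurable
    (X2_integrable hξ hmom4 hident s' c d).aestronglyMeasurable
  have h2 : (∫ ω, X ω a s * X ω b s * (X ω c s' * X ω d s') ∂μ)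
      = (∫ ω, X ω a s * X ω b s ∂μ) * ∫ ω, X ω c s' * X ω d s' ∂μ := h
  rw [h2, X2_moment hξ hcov hident s a b, X2_moment hξ hcov hident s' c d]

lemma X4_integrable_cross (hξ : Measurable ξ)
    (hmom4 : Integrable (fun ω => (∑ i, ξ ω i ^ 2) ^ 2) μ)
    (hindep : iIndepFun
      (fun t ω => fun i => X ω i t) μ)
    (hident : ∀ t : Fin tout, IdentDistrib (fun ω => fun i => X ω i t) ξ μ μ)
    {s s' : Fin tout} (hss' : s ≠ s') (a b c d : Fin n) :
    Integrable (fun ω => (X ω a s * X ω b s) * (X ω c s' * X ω d s')) μ := by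
  have hind : IndepFun (fun ω => X ω a s * X ω b s) (fun ω => X ω c s' * X ω d s') μ :=
    (hindep.indepFun hss').comp (g2_meas a b) (g2_meas c d)
  have h := hind.integrable_mul (X2_integrable hξ hmom4 hident s a b)
    (X2_integrable hξ hmom4 hident s' c d)
  exact h

end XMoments

section Helpers
variable {Ω : Type*} [MeasurableSpace Ω] {μ : Measure Ω} [IsProbabilityMeasure μ] {n : ℕ}

lemma bounded_integrable {f : Ω → ℝ} (hf : Measurable f) (C : ℝ) (hC : ∀ ω, |f ω| ≤ C) :
    Integrable f μ := by
  refine Integrable.mono' (integrable_const C) hf.aestronglyMeasurable ?_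
  filter_upwards with ω
  rw [Real.norm_eq_abs]
  exact hC ω

lemma sum4_delta1 (f : Fin n → ℝ) :
    (∑ j, ∑ k, ∑ l, ∑ m, f j * f k * f l * f m *
      ((if j = k then (1:ℝ) else 0) * (if l = m then 1 else 0)))
      = (∑ j, f j ^ 2) ^ 2 := by
  have h1 : ∀ j k l : Fin n, ∑ m, f j * f k * f l * f m *
      ((if j = k then (1:ℝ) else 0) * (if l = m then 1 else 0))
      = f j * f k * f l * f l * (if j = k then (1:ℝ) else 0) := by
    intro j k l
    rw [Finset.sum_congr rfl (fun m _ => show f j * f k * f l * f m *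
        ((if j = k then (1:ℝ) else 0) * (if l = m then 1 else 0))
        = if l = m then f j * f k * f l * f m * (if j = k then (1:ℝ) else 0) else 0 from by
      by_cases h : l = m <;> simp [h]), Finset.sum_ite_eq, if_pos (Finset.mem_univ l)]
  have h2 : ∀ j k : Fin n, (∑ l, f j * f k * f l * f l * (if j = k then (1:ℝ) else 0))
      = (if j = k then (1:ℝ) else 0) * ∑ l, f j * f k * f l * f l := by
    intro j k
    rw [Finset.mul_sum]
    exact Finset.sum_congr rfl fun l _ => by ring
  have h3 : ∀ j : Fin n, (∑ k, (if j = k then (1:ℝ) else 0) * ∑ l, f j * f k * f l * f l)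
      = ∑ l, f j * f j * f l * f l := by
    intro j
    rw [Finset.sum_congr rfl (fun k _ => show (if j = k then (1:ℝ) else 0) *
        ∑ l, f j * f k * f l * f l = if j = k then (∑ l, f j * f k * f l * f l) else 0 from by
      by_cases h : j = k <;> simp [h]), Finset.sum_ite_eq, if_pos (Finset.mem_univ j)]
  calc (∑ j, ∑ k, ∑ l, ∑ m, f j * f k * f l * f m *
      ((if j = k then (1:ℝ) else 0) * (if l = m then 1 else 0)))
      = ∑ j, ∑ l, f j * f j * f l * f l := by
        refine Finset.sum_congr rfl fun j _ => ?_
        rw [Finset.sum_congr rfl (fun k _ => Finset.sum_congr rfl fun l _ => h1 j k l),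
          Finset.sum_congr rfl (fun k _ => h2 j k), h3 j]
    _ = (∑ j, f j ^ 2) ^ 2 := by
        rw [sq, Finset.sum_mul_sum]
        exact Finset.sum_congr rfl fun j _ => Finset.sum_congr rfl fun l _ => by ring

lemma sum4_delta2 (f : Fin n → ℝ) :
    (∑ j, ∑ k, ∑ l, ∑ m, f j * f k * f l * f m *
      ((if j = l then (1:ℝ) else 0) * (if k = m then 1 else 0)))
      = (∑ j, f j ^ 2) ^ 2 := by
  have h1 : ∀ j k l : Fin n, ∑ m, f j * f k * f l * f m *
      ((if j = l then (1:ℝ) else 0) * (if k = m then 1 else 0))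
      = f j * f k * f l * f k * (if j = l then (1:ℝ) else 0) := by
    intro j k l
    rw [Finset.sum_congr rfl (fun m _ => show f j * f k * f l * f m *
        ((if j = l then (1:ℝ) else 0) * (if k = m then 1 else 0))
        = if k = m then f j * f k * f l * f m * (if j = l then (1:ℝ) else 0) else 0 from by
      by_cases h : k = m <;> simp [h]), Finset.sum_ite_eq, if_pos (Finset.mem_univ k)]
  have h2 : ∀ j k : Fin n, (∑ l, f j * f k * f l * f k * (if j = l then (1:ℝ) else 0))
      = f j * f j * f k * f k := by
    intro j k
    rw [Finset.sum_congr rfl (fun l _ => show f j * f k * f l * f k *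
        (if j = l then (1:ℝ) else 0) = if j = l then f j * f k * f l * f k else 0 from by
      by_cases h : j = l <;> simp [h]), Finset.sum_ite_eq, if_pos (Finset.mem_univ j)]
    ring
  calc (∑ j, ∑ k, ∑ l, ∑ m, f j * f k * f l * f m *
      ((if j = l then (1:ℝ) else 0) * (if k = m then 1 else 0)))
      = ∑ j, ∑ k, f j * f j * f k * f k := by
        refine Finset.sum_congr rfl fun j _ => Finset.sum_congr rfl fun k _ => ?_
        rw [Finset.sum_congr rfl (fun l _ => h1 j k l), h2 j k]
    _ = (∑ j, f j ^ 2) ^ 2 := by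
        rw [sq, Finset.sum_mul_sum]
        exact Finset.sum_congr rfl fun j _ => Finset.sum_congr rfl fun l _ => by ring

lemma sum4_delta3 (f : Fin n → ℝ) :
    (∑ j, ∑ k, ∑ l, ∑ m, f j * f k * f l * f m *
      ((if j = m then (1:ℝ) else 0) * (if k = l then 1 else 0)))
      = (∑ j, f j ^ 2) ^ 2 := by
  have h1 : ∀ j k l : Fin n, ∑ m, f j * f k * f l * f m *
      ((if j = m then (1:ℝ) else 0) * (if k = l then 1 else 0))
      = f j * f k * f l * f j * (if k = l then (1:ℝ) else 0) := by
    intro j k l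
    rw [Finset.sum_congr rfl (fun m _ => show f j * f k * f l * f m *
        ((if j = m then (1:ℝ) else 0) * (if k = l then 1 else 0))
        = if j = m then f j * f k * f l * f m * (if k = l then (1:ℝ) else 0) else 0 from by
      by_cases h : j = m <;> simp [h]), Finset.sum_ite_eq, if_pos (Finset.mem_univ j)]
  have h2 : ∀ j k : Fin n, (∑ l, f j * f k * f l * f j * (if k = l then (1:ℝ) else 0))
      = f j * f j * f k * f k := by
    intro j k
    rw [Finset.sum_congr rfl (fun l _ => show f j * f k * f l * f j *
        (if k = l then (1:ℝ) else 0) = if k = l then f j * f k * f l * f j else 0 from by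
      by_cases h : k = l <;> simp [h]), Finset.sum_ite_eq, if_pos (Finset.mem_univ k)]
    ring
  calc (∑ j, ∑ k, ∑ l, ∑ m, f j * f k * f l * f m *
      ((if j = m then (1:ℝ) else 0) * (if k = l then 1 else 0)))
      = ∑ j, ∑ k, f j * f j * f k * f k := by
        refine Finset.sum_congr rfl fun j _ => Finset.sum_congr rfl fun k _ => ?_
        rw [Finset.sum_congr rfl (fun l _ => h1 j k l), h2 j k]
    _ = (∑ j, f j ^ 2) ^ 2 := by
        rw [sq, Finset.sum_mul_sum]
        exact Finset.sum_congr rfl fun j _ => Finset.sum_congr rfl fun l _ => by ring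

lemma sum2_delta (f : Fin n → ℝ) (W : ℝ) :
    (∑ j, ∑ k, f j * f k * W * (if j = k then (1:ℝ) else 0)) = (∑ j, f j ^ 2) * W := by
  have h1 : ∀ j : Fin n, (∑ k, f j * f k * W * (if j = k then (1:ℝ) else 0))
      = f j * f j * W := by
    intro j
    rw [Finset.sum_congr rfl (fun k _ => show f j * f k * W * (if j = k then (1:ℝ) else 0)
        = if j = k then f j * f k * W else 0 from by by_cases h : j = k <;> simp [h]),
      Finset.sum_ite_eq, if_pos (Finset.mem_univ j)]
  rw [Finset.sum_congr rfl fun j _ => h1 j, Finset.sum_mul]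
  exact Finset.sum_congr rfl fun j _ => by ring

end Helpers

section KeyLemmas
variable {Ω : Type*} [MeasurableSpace Ω] {μ : Measure Ω} [IsProbabilityMeasure μ]
variable {n tout : ℕ} {ξ : Ω → Fin n → ℝ} {X : Ω → Matrix (Fin n) (Fin tout) ℝ}
variable {V : Ω → Matrix (Fin n) (Fin n) ℝ}

lemma integral_sum4 {g : Fin n → Fin n → Fin n → Fin n → Ω → ℝ}
    (hg : ∀ j k l m, Integrable (g j k l m) μ) :
    ∫ ω, ∑ j, ∑ k, ∑ l, ∑ m, g j k l m ω ∂μ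
      = ∑ j, ∑ k, ∑ l, ∑ m, ∫ ω, g j k l m ω ∂μ := by
  rw [integral_finset_sum _ fun j _ => integrable_finset_sum _ fun k _ =>
    integrable_finset_sum _ fun l _ => integrable_finset_sum _ fun m _ => hg j k l m]
  refine Finset.sum_congr rfl fun j _ => ?_
  rw [integral_finset_sum _ fun k _ => integrable_finset_sum _ fun l _ =>
    integrable_finset_sum _ fun m _ => hg j k l m]
  refine Finset.sum_congr rfl fun k _ => ?_
  rw [integral_finset_sum _ fun l _ => integrable_finset_sum _ fun m _ => hg j k l m]
  refine Finset.sum_congr rfl fun l _ => ?_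
  rw [integral_finset_sum _ fun m _ => hg j k l m]

lemma integral_sum2 {g : Fin n → Fin n → Ω → ℝ}
    (hg : ∀ j k, Integrable (g j k) μ) :
    ∫ ω, ∑ j, ∑ k, g j k ω ∂μ = ∑ j, ∑ k, ∫ ω, g j k ω ∂μ := by
  rw [integral_finset_sum _ fun j _ => integrable_finset_sum _ fun k _ => hg j k]
  exact Finset.sum_congr rfl fun j _ => integral_finset_sum _ fun k _ => hg j k

lemma mXentry (a : Fin n) (t : Fin tout) :
    Measurable fun M : Matrix (Fin n) (Fin tout) ℝ => M a t :=
  (measurable_pi_apply t).comp (measurable_pi_apply a)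

lemma abs_mul4_le {a b c d K : ℝ} (hK : 0 ≤ K) (ha : |a| ≤ K) (hb : |b| ≤ K)
    (hc : |c| ≤ K) (hd : |d| ≤ K) : |a * b * c * d| ≤ K ^ 4 := by
  have h2 : |a * b| ≤ K ^ 2 := by
    rw [abs_mul]
    calc |a| * |b| ≤ K * K := mul_le_mul ha hb (abs_nonneg _) hK
      _ = K ^ 2 := (sq K).symm
  have h3 : |c * d| ≤ K ^ 2 := by
    rw [abs_mul]
    calc |c| * |d| ≤ K * K := mul_le_mul hc hd (abs_nonneg _) hK
      _ = K ^ 2 := (sq K).symm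
  calc |a * b * c * d| = |a * b| * |c * d| := by rw [← abs_mul]; ring_nf
    _ ≤ K ^ 2 * K ^ 2 := mul_le_mul h2 h3 (abs_nonneg _) (by positivity)
    _ = K ^ 4 := by ring

lemma key_pair (hn : 1 ≤ n) (hξmeas : Measurable ξ)
    (hrot : ∀ O : Matrix (Fin n) (Fin n) ℝ, Oᵀ * O = 1 →
      Measure.map (fun ω => O.mulVec (ξ ω)) μ = Measure.map ξ μ)
    (hcov : ∀ i j : Fin n, ∫ ω, ξ ω i * ξ ω j ∂μ = if i = j then (1 : ℝ) else 0)
    (hmom4 : Integrable (fun ω => (∑ i, ξ ω i ^ 2) ^ 2) μ)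
    (hindep : iIndepFun
      (fun t ω => fun i => X ω i t) μ)
    (hident : ∀ t : Fin tout, IdentDistrib (fun ω => fun i => X ω i t) ξ μ μ)
    (hVmeas : Measurable V) (hVX : IndepFun V X μ)
    {γ : ℝ} (hγ : γ = (∫ ω, (∑ i, ξ ω i ^ 2) ^ 2 ∂μ) / ((n : ℝ) * ((n : ℝ) + 2)))
    (F : Matrix (Fin n) (Fin n) ℝ → Fin n → ℝ)
    (hFmeas : ∀ j, Measurable fun v => F v j)
    (K : ℝ) (hK : 0 ≤ K) (hFb : ∀ ω j, |F (V ω) j| ≤ K)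
    (s s' : Fin tout) :
    (∫ ω, (∑ j, F (V ω) j * X ω j s) ^ 2 * (∑ j, F (V ω) j * X ω j s') ^ 2 ∂μ
      = (if s = s' then 3 * γ else 1) * ∫ ω, (∑ j, (F (V ω) j) ^ 2) ^ 2 ∂μ)
    ∧ Integrable (fun ω => (∑ j, F (V ω) j * X ω j s) ^ 2
        * (∑ j, F (V ω) j * X ω j s') ^ 2) μ := by
  have hXMval : ∀ j k l m : Fin n, ∫ ω, (X ω j s * X ω k s) * (X ω l s' * X ω m s') ∂μ
      = if s = s' then γ * ((if j = k then (1:ℝ) else 0) * (if l = m then (1:ℝ) else 0)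
          + (if j = l then (1:ℝ) else 0) * (if k = m then (1:ℝ) else 0)
          + (if j = m then (1:ℝ) else 0) * (if k = l then (1:ℝ) else 0))
        else (if j = k then (1:ℝ) else 0) * (if l = m then (1:ℝ) else 0) := by
    intro j k l m
    by_cases hss : s = s'
    · subst hss
      rw [if_pos rfl]
      have hre : (∫ ω, (X ω j s * X ω k s) * (X ω l s * X ω m s) ∂μ)
          = ∫ ω, X ω j s * X ω k s * X ω l s * X ω m s ∂μ := by
        apply integral_congr_ae
        filter_upwards with ω
        ring
      rw [hre, X4_moment_same hn hξmeas hrot hmom4 hγ hident s j k l m]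
    · rw [if_neg hss, X4_moment_cross hξmeas hcov hmom4 hindep hident hss j k l m]
  have hGint : ∀ j k l m : Fin n,
      Integrable (fun ω => (X ω j s * X ω k s) * (X ω l s' * X ω m s')) μ := by
    intro j k l m
    by_cases hss : s = s'
    · subst hss
      exact (X4_integrable_same hξmeas hmom4 hident s j k l m).congr
        (Filter.Eventually.of_forall fun ω => by ring)
    · exact X4_integrable_cross hξmeas hmom4 hindep hident hss j k l m
  have hFq_meas : ∀ j k l m : Fin n,
      Measurable fun v : Matrix (Fin n) (Fin n) ℝ => F v j * F v k * F v l * F v m :=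
    fun j k l m => (((hFmeas j).mul (hFmeas k)).mul (hFmeas l)).mul (hFmeas m)
  have hFq_int : ∀ j k l m : Fin n,
      Integrable (fun ω => F (V ω) j * F (V ω) k * F (V ω) l * F (V ω) m) μ := by
    intro j k l m
    exact bounded_integrable ((hFq_meas j k l m).comp hVmeas) (K^4)
      (fun ω => abs_mul4_le hK (hFb ω j) (hFb ω k) (hFb ω l) (hFb ω m))
  have hind : ∀ j k l m : Fin n,
      IndepFun (fun ω => F (V ω) j * F (V ω) k * F (V ω) l * F (V ω) m)
        (fun ω => (X ω j s * X ω k s) * (X ω l s' * X ω m s')) μ := fun j k l m =>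
    hVX.comp (hFq_meas j k l m)
      (((mXentry j s).mul (mXentry k s)).mul ((mXentry l s').mul (mXentry m s')))
  have hterm_int : ∀ j k l m : Fin n,
      Integrable (fun ω => (F (V ω) j * F (V ω) k * F (V ω) l * F (V ω) m)
        * ((X ω j s * X ω k s) * (X ω l s' * X ω m s'))) μ := by
    intro j k l m
    have h := (hind j k l m).integrable_mul (hFq_int j k l m) (hGint j k l m)
    exact h
  have hterm : ∀ j k l m : Fin n,
      (∫ ω, (F (V ω) j * F (V ω) k * F (V ω) l * F (V ω) m)
          * ((X ω j s * X ω k s) * (X ω l s' * X ω m s')) ∂μ)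
      = (∫ ω, F (V ω) j * F (V ω) k * F (V ω) l * F (V ω) m ∂μ)
        * (if s = s' then γ * ((if j = k then (1:ℝ) else 0) * (if l = m then (1:ℝ) else 0)
          + (if j = l then (1:ℝ) else 0) * (if k = m then (1:ℝ) else 0)
          + (if j = m then (1:ℝ) else 0) * (if k = l then (1:ℝ) else 0))
        else (if j = k then (1:ℝ) else 0) * (if l = m then (1:ℝ) else 0)) := by
    intro j k l m
    have h := (hind j k l m).integral_mul_eq_mul_integral (hFq_int j k l m).aestronglyMeasurable (hGint j k l m).aestronglyMeasurable
    have h2 : (∫ ω, (F (V ω) j * F (V ω) k * F (V ω) l * F (V ω) m)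
        * ((X ω j s * X ω k s) * (X ω l s' * X ω m s')) ∂μ)
        = (∫ ω, F (V ω) j * F (V ω) k * F (V ω) l * F (V ω) m ∂μ)
          * ∫ ω, (X ω j s * X ω k s) * (X ω l s' * X ω m s') ∂μ := h
    rw [h2, hXMval j k l m]
  have hpt : (fun ω => (∑ j, F (V ω) j * X ω j s) ^ 2 * (∑ j, F (V ω) j * X ω j s') ^ 2)
      = fun ω => ∑ j, ∑ k, ∑ l, ∑ m, (F (V ω) j * F (V ω) k * F (V ω) l * F (V ω) m)
          * ((X ω j s * X ω k s) * (X ω l s' * X ω m s')) := by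
    funext ω
    rw [sq, sq, Finset.sum_mul_sum, Finset.sum_mul_sum, Finset.sum_mul]
    refine Finset.sum_congr rfl fun j _ => ?_
    rw [Finset.sum_mul]
    refine Finset.sum_congr rfl fun k _ => ?_
    rw [Finset.mul_sum]
    refine Finset.sum_congr rfl fun l _ => ?_
    rw [Finset.mul_sum]
    exact Finset.sum_congr rfl fun m _ => by ring
  -- the three collapsed sums
  have hS : ∀ (D : Fin n → Fin n → Fin n → Fin n → ℝ),
      (∀ ω, (∑ j, ∑ k, ∑ l, ∑ m, (F (V ω) j * F (V ω) k * F (V ω) l * F (V ω) m) * D j k l m)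
        = (∑ j, (F (V ω) j) ^ 2) ^ 2) →
      (∑ j, ∑ k, ∑ l, ∑ m,
        (∫ ω, F (V ω) j * F (V ω) k * F (V ω) l * F (V ω) m ∂μ) * D j k l m)
        = ∫ ω, (∑ j, (F (V ω) j) ^ 2) ^ 2 ∂μ := by
    intro D hD
    have e : ∀ j k l m : Fin n,
        (∫ ω, F (V ω) j * F (V ω) k * F (V ω) l * F (V ω) m ∂μ) * D j k l m
        = ∫ ω, (F (V ω) j * F (V ω) k * F (V ω) l * F (V ω) m) * D j k l m ∂μ :=
      fun j k l m => (integral_mul_const _ _).symm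
    rw [Finset.sum_congr rfl fun j _ => Finset.sum_congr rfl fun k _ =>
      Finset.sum_congr rfl fun l _ => Finset.sum_congr rfl fun m _ => e j k l m,
      ← integral_sum4 (fun j k l m => (hFq_int j k l m).mul_const _)]
    apply integral_congr_ae
    filter_upwards with ω
    exact hD ω
  have hS1 := hS (fun j k l m => (if j = k then (1:ℝ) else 0) * (if l = m then (1:ℝ) else 0))
    (fun ω => sum4_delta1 (fun j => F (V ω) j))
  have hS2 := hS (fun j k l m => (if j = l then (1:ℝ) else 0) * (if k = m then (1:ℝ) else 0))
    (fun ω => sum4_delta2 (fun j => F (V ω) j))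
  have hS3 := hS (fun j k l m => (if j = m then (1:ℝ) else 0) * (if k = l then (1:ℝ) else 0))
    (fun ω => sum4_delta3 (fun j => F (V ω) j))
  constructor
  · rw [hpt, integral_sum4 hterm_int,
      Finset.sum_congr rfl fun j _ => Finset.sum_congr rfl fun k _ =>
        Finset.sum_congr rfl fun l _ => Finset.sum_congr rfl fun m _ => hterm j k l m]
    by_cases hss : s = s'
    · subst hss
      rw [if_pos rfl]
      have hsplit : ∀ j k l m : Fin n,
          (∫ ω, F (V ω) j * F (V ω) k * F (V ω) l * F (V ω) m ∂μ)
            * (if s = s then γ * ((if j = k then (1:ℝ) else 0) * (if l = m then (1:ℝ) else 0)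
              + (if j = l then (1:ℝ) else 0) * (if k = m then (1:ℝ) else 0)
              + (if j = m then (1:ℝ) else 0) * (if k = l then (1:ℝ) else 0))
            else (if j = k then (1:ℝ) else 0) * (if l = m then (1:ℝ) else 0))
          = γ * ((∫ ω, F (V ω) j * F (V ω) k * F (V ω) l * F (V ω) m ∂μ)
              * ((if j = k then (1:ℝ) else 0) * (if l = m then (1:ℝ) else 0)))
            + γ * ((∫ ω, F (V ω) j * F (V ω) k * F (V ω) l * F (V ω) m ∂μ)
              * ((if j = l then (1:ℝ) else 0) * (if k = m then (1:ℝ) else 0)))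
            + γ * ((∫ ω, F (V ω) j * F (V ω) k * F (V ω) l * F (V ω) m ∂μ)
              * ((if j = m then (1:ℝ) else 0) * (if k = l then (1:ℝ) else 0))) := by
        intro j k l m
        rw [if_pos rfl]
        ring
      rw [Finset.sum_congr rfl fun j _ => Finset.sum_congr rfl fun k _ =>
        Finset.sum_congr rfl fun l _ => Finset.sum_congr rfl fun m _ => hsplit j k l m]
      simp only [Finset.sum_add_distrib, ← Finset.mul_sum]
      rw [hS1, hS2, hS3]
      ring
    · rw [if_neg hss]
      have hplain : ∀ j k l m : Fin n,
          (∫ ω, F (V ω) j * F (V ω) k * F (V ω) l * F (V ω) m ∂μ)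
            * (if s = s' then γ * ((if j = k then (1:ℝ) else 0) * (if l = m then (1:ℝ) else 0)
              + (if j = l then (1:ℝ) else 0) * (if k = m then (1:ℝ) else 0)
              + (if j = m then (1:ℝ) else 0) * (if k = l then (1:ℝ) else 0))
            else (if j = k then (1:ℝ) else 0) * (if l = m then (1:ℝ) else 0))
          = (∫ ω, F (V ω) j * F (V ω) k * F (V ω) l * F (V ω) m ∂μ)
            * ((if j = k then (1:ℝ) else 0) * (if l = m then (1:ℝ) else 0)) := by
        intro j k l m
        rw [if_neg hss]
      rw [Finset.sum_congr rfl fun j _ => Finset.sum_congr rfl fun k _ =>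
        Finset.sum_congr rfl fun l _ => Finset.sum_congr rfl fun m _ => hplain j k l m,
        hS1, one_mul]
  · rw [hpt]
    exact integrable_finset_sum _ fun j _ => integrable_finset_sum _ fun k _ =>
      integrable_finset_sum _ fun l _ => integrable_finset_sum _ fun m _ => hterm_int j k l m

lemma key_W (hξmeas : Measurable ξ)
    (hcov : ∀ i j : Fin n, ∫ ω, ξ ω i * ξ ω j ∂μ = if i = j then (1 : ℝ) else 0)
    (hmom4 : Integrable (fun ω => (∑ i, ξ ω i ^ 2) ^ 2) μ)
    (hident : ∀ t : Fin tout, IdentDistrib (fun ω => fun i => X ω i t) ξ μ μ)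
    (hVmeas : Measurable V) (hVX : IndepFun V X μ)
    (F : Matrix (Fin n) (Fin n) ℝ → Fin n → ℝ)
    (hFmeas : ∀ j, Measurable fun v => F v j)
    (K : ℝ) (hK : 0 ≤ K) (hFb : ∀ ω j, |F (V ω) j| ≤ K)
    (s : Fin tout) :
    (∫ ω, (∑ j, F (V ω) j * X ω j s) ^ 2 * (∑ j, (F (V ω) j) ^ 2) ∂μ
      = ∫ ω, (∑ j, (F (V ω) j) ^ 2) ^ 2 ∂μ)
    ∧ Integrable (fun ω => (∑ j, F (V ω) j * X ω j s) ^ 2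
        * (∑ j, (F (V ω) j) ^ 2)) μ := by
  have hFW_meas : ∀ j k : Fin n,
      Measurable fun v : Matrix (Fin n) (Fin n) ℝ => F v j * F v k * (∑ l, (F v l) ^ 2) :=
    fun j k => ((hFmeas j).mul (hFmeas k)).mul
      (Finset.measurable_sum _ fun l _ => (hFmeas l).pow measurable_const)
  have hWb : ∀ ω, |∑ l, (F (V ω) l) ^ 2| ≤ (n : ℝ) * K ^ 2 := by
    intro ω
    rw [abs_of_nonneg (Finset.sum_nonneg fun l _ => sq_nonneg _)]
    calc (∑ l, (F (V ω) l) ^ 2) ≤ ∑ _l : Fin n, K ^ 2 := by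
          refine Finset.sum_le_sum fun l _ => ?_
          rw [← sq_abs]
          exact pow_le_pow_left₀ (abs_nonneg _) (hFb ω l) 2
      _ = (n : ℝ) * K ^ 2 := by
          rw [Finset.sum_const, Finset.card_univ, Fintype.card_fin, nsmul_eq_mul]
  have hFW_int : ∀ j k : Fin n,
      Integrable (fun ω => F (V ω) j * F (V ω) k * (∑ l, (F (V ω) l) ^ 2)) μ := by
    intro j k
    refine bounded_integrable ((hFW_meas j k).comp hVmeas) (K * K * ((n:ℝ) * K ^ 2)) ?_
    intro ω
    rw [abs_mul, abs_mul]
    refine mul_le_mul (mul_le_mul (hFb ω j) (hFb ω k) (abs_nonneg _) hK) (hWb ω)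
      (abs_nonneg _) ?_
    positivity
  have hind : ∀ j k : Fin n,
      IndepFun (fun ω => F (V ω) j * F (V ω) k * (∑ l, (F (V ω) l) ^ 2))
        (fun ω => X ω j s * X ω k s) μ := fun j k =>
    hVX.comp (hFW_meas j k) ((mXentry j s).mul (mXentry k s))
  have hterm_int : ∀ j k : Fin n,
      Integrable (fun ω => (F (V ω) j * F (V ω) k * (∑ l, (F (V ω) l) ^ 2))
        * (X ω j s * X ω k s)) μ := by
    intro j k
    have h := (hind j k).integrable_mul (hFW_int j k) (X2_integrable hξmeas hmom4 hident s j k)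
    exact h
  have hterm : ∀ j k : Fin n,
      (∫ ω, (F (V ω) j * F (V ω) k * (∑ l, (F (V ω) l) ^ 2)) * (X ω j s * X ω k s) ∂μ)
      = (∫ ω, F (V ω) j * F (V ω) k * (∑ l, (F (V ω) l) ^ 2) ∂μ)
        * (if j = k then (1:ℝ) else 0) := by
    intro j k
    have h := (hind j k).integral_mul_eq_mul_integral (hFW_int j k).aestronglyMeasurable
      (X2_integrable hξmeas hmom4 hident s j k).aestronglyMeasurable
    have h2 : (∫ ω, (F (V ω) j * F (V ω) k * (∑ l, (F (V ω) l) ^ 2))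
        * (X ω j s * X ω k s) ∂μ)
        = (∫ ω, F (V ω) j * F (V ω) k * (∑ l, (F (V ω) l) ^ 2) ∂μ)
          * ∫ ω, X ω j s * X ω k s ∂μ := h
    rw [h2, X2_moment hξmeas hcov hident s j k]
  have hpt : (fun ω => (∑ j, F (V ω) j * X ω j s) ^ 2 * (∑ j, (F (V ω) j) ^ 2))
      = fun ω => ∑ j, ∑ k, (F (V ω) j * F (V ω) k * (∑ l, (F (V ω) l) ^ 2))
          * (X ω j s * X ω k s) := by
    funext ω
    rw [sq, Finset.sum_mul_sum, Finset.sum_mul]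
    refine Finset.sum_congr rfl fun j _ => ?_
    rw [Finset.sum_mul]
    exact Finset.sum_congr rfl fun k _ => by ring
  constructor
  · rw [hpt, integral_sum2 hterm_int,
      Finset.sum_congr rfl fun j _ => Finset.sum_congr rfl fun k _ => hterm j k]
    have e : ∀ j k : Fin n,
        (∫ ω, F (V ω) j * F (V ω) k * (∑ l, (F (V ω) l) ^ 2) ∂μ)
          * (if j = k then (1:ℝ) else 0)
        = ∫ ω, (F (V ω) j * F (V ω) k * (∑ l, (F (V ω) l) ^ 2))
            * (if j = k then (1:ℝ) else 0) ∂μ :=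
      fun j k => (integral_mul_const _ _).symm
    rw [Finset.sum_congr rfl fun j _ => Finset.sum_congr rfl fun k _ => e j k,
      ← integral_sum2 (fun j k => (hFW_int j k).mul_const _)]
    apply integral_congr_ae
    filter_upwards with ω
    have := sum2_delta (fun j => F (V ω) j) (∑ l, (F (V ω) l) ^ 2)
    rw [this]
    rw [sq]
  · rw [hpt]
    exact integrable_finset_sum _ fun j _ => integrable_finset_sum _ fun k _ => hterm_int j k

end KeyLemmas

lemma trace_diagonal_mul {n : ℕ} (d : Fin n → ℝ) (M : Matrix (Fin n) (Fin n) ℝ) :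
    (Matrix.diagonal d * M).trace = ∑ i, d i * M i i := by
  rw [Matrix.trace]
  exact Finset.sum_congr rfl fun i _ => by
    rw [Matrix.diag_apply, Matrix.diagonal_mul]

end AuxStmt9

/-- For the test-set sample covariance `E_out = (1/t_out)·√Σ X Xᵀ √Σ` built from rotationally
invariant noise, and a random orthogonal matrix `V` independent of the test noise:
the holdout estimator `Ξᴴ = V·Diag(Vᵀ E_out V)·Vᵀ` has expected normalized Frobenius error
`E[τ((Ξᴴ − Σ)²)] = ((3γ−1)/t_out − 1)·E[τ(Diag(Vᵀ Σ V)²)] + τ(Σ²)`,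
with `γ = E[‖ξ‖⁴]/(n(n+2))`. -/
theorem stmt_9 {Ω : Type*} [MeasurableSpace Ω] (μ : Measure Ω) [IsProbabilityMeasure μ]
    (n tout : ℕ) (hn : 1 ≤ n) (htout : 1 ≤ tout)
    (S R : Matrix (Fin n) (Fin n) ℝ)
    (hS : S.PosSemidef) (hR : R.PosSemidef) (hRS : R * R = S)
    (ξ : Ω → Fin n → ℝ) (hξmeas : Measurable ξ)
    (hrot : ∀ O : Matrix (Fin n) (Fin n) ℝ, Oᵀ * O = 1 →
      Measure.map (fun ω => O.mulVec (ξ ω)) μ = Measure.map ξ μ)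
    (hcov : ∀ i j : Fin n, ∫ ω, ξ ω i * ξ ω j ∂μ = if i = j then (1 : ℝ) else 0)
    (hmom4 : Integrable (fun ω => (∑ i, ξ ω i ^ 2) ^ 2) μ)
    (X : Ω → Matrix (Fin n) (Fin tout) ℝ) (hXmeas : Measurable X)
    (hindep : iIndepFun
      (fun t ω => fun i => X ω i t) μ)
    (hident : ∀ t : Fin tout, IdentDistrib (fun ω => fun i => X ω i t) ξ μ μ)
    (Eout : Ω → Matrix (Fin n) (Fin n) ℝ)
    (hEout : ∀ ω, Eout ω = ((tout : ℝ)⁻¹) • (R * X ω * (X ω)ᵀ * R))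
    (V : Ω → Matrix (Fin n) (Fin n) ℝ) (hVmeas : Measurable V)
    (hVorth : ∀ ω, (V ω)ᵀ * V ω = 1)
    (hVX : IndepFun V X μ)
    (γ : ℝ) (hγ : γ = (∫ ω, (∑ i, ξ ω i ^ 2) ^ 2 ∂μ) / ((n : ℝ) * ((n : ℝ) + 2)))
    (Xi : Ω → Matrix (Fin n) (Fin n) ℝ)
    (hXi : ∀ ω, Xi ω = V ω * diagPart n ((V ω)ᵀ * Eout ω * V ω) * (V ω)ᵀ) :
    ∫ ω, tau n ((Xi ω - S) ^ 2) ∂μ =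
      ((3 * γ - 1) / (tout : ℝ) - 1) *
          ∫ ω, tau n ((diagPart n ((V ω)ᵀ * S * V ω)) ^ 2) ∂μ +
        tau n (S * S) := by
  have htpos : (0:ℝ) < (tout:ℝ) := by exact_mod_cast htout
  have htne : (tout:ℝ) ≠ 0 := ne_of_gt htpos
  have hnpos : (0:ℝ) < (n:ℝ) := by exact_mod_cast hn
  have hRsym : Rᵀ = R := by
    have h : Rᴴ = R := hR.1
    rwa [Matrix.conjTranspose_eq_transpose_of_trivial] at h
  -- coefficient functions
  set F : Fin n → Matrix (Fin n) (Fin n) ℝ → Fin n → ℝ := fun i v j => (R * v) j i with hF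
  have hFmeas : ∀ i j, Measurable fun v => F i v j := by
    intro i j
    simp only [hF, Matrix.mul_apply]
    exact Finset.measurable_sum _ fun l _ =>
      measurable_const.mul ((measurable_pi_apply i).comp (measurable_pi_apply l))
  set K : ℝ := ∑ p, ∑ q, |R p q| with hKdef
  have hK : 0 ≤ K := by
    rw [hKdef]
    positivity
  have hVabs : ∀ ω p q, |V ω p q| ≤ 1 := by
    intro ω p q
    have h1 : ((V ω)ᵀ * V ω) q q = 1 := by rw [hVorth ω, Matrix.one_apply_eq]
    have h2 : (∑ p', V ω p' q * V ω p' q) = 1 := by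
      rw [← h1, Matrix.mul_apply]
      exact Finset.sum_congr rfl fun p' _ => by rw [Matrix.transpose_apply]
    have h3 : V ω p q * V ω p q ≤ 1 := by
      rw [← h2]
      exact Finset.single_le_sum (f := fun p' => V ω p' q * V ω p' q)
        (fun p' _ => mul_self_nonneg _) (Finset.mem_univ p)
    nlinarith [abs_nonneg (V ω p q), sq_abs (V ω p q)]
  have hFb : ∀ i (ω : Ω) j, |F i (V ω) j| ≤ K := by
    intro i ω j
    simp only [hF, Matrix.mul_apply]
    calc |∑ l, R j l * V ω l i| ≤ ∑ l, |R j l * V ω l i| := Finset.abs_sum_le_sum_abs _ _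
      _ ≤ ∑ l, |R j l| := by
          refine Finset.sum_le_sum fun l _ => ?_
          rw [abs_mul]
          calc |R j l| * |V ω l i| ≤ |R j l| * 1 :=
                mul_le_mul_of_nonneg_left (hVabs ω l i) (abs_nonneg _)
            _ = |R j l| := mul_one _
      _ ≤ K := Finset.single_le_sum
          (fun p _ => Finset.sum_nonneg fun q _ => abs_nonneg (R p q)) (Finset.mem_univ j)
  -- ∑_j F i v j ^2 = (vᵀ S v) i i
  have hW : ∀ (v : Matrix (Fin n) (Fin n) ℝ) (i : Fin n),
      (∑ j, (F i v j) ^ 2) = (vᵀ * S * v) i i := by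
    intro v i
    have hmat : vᵀ * S * v = (R * v)ᵀ * (R * v) := by
      rw [Matrix.transpose_mul, hRsym, ← hRS]
      simp only [Matrix.mul_assoc]
    rw [hmat, Matrix.mul_apply]
    exact Finset.sum_congr rfl fun j _ => by
      rw [Matrix.transpose_apply, hF, sq]
  -- diagonal entries of Vᵀ Eout V
  have hMA : ∀ ω (i : Fin n), ((V ω)ᵀ * Eout ω * V ω) i i
      = (tout:ℝ)⁻¹ * ∑ s, (∑ j, F i (V ω) j * X ω j s) ^ 2 := by
    intro ω i
    rw [hEout ω]
    have hsm : (V ω)ᵀ * ((tout : ℝ)⁻¹ • (R * X ω * (X ω)ᵀ * R)) * V ω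
        = (tout : ℝ)⁻¹ • ((V ω)ᵀ * (R * X ω * (X ω)ᵀ * R) * V ω) := by
      rw [Matrix.mul_smul, Matrix.smul_mul]
    rw [hsm, Matrix.smul_apply, smul_eq_mul]
    congr 1
    have hmat : (V ω)ᵀ * (R * X ω * (X ω)ᵀ * R) * V ω
        = ((R * V ω)ᵀ * X ω) * ((R * V ω)ᵀ * X ω)ᵀ := by
      simp only [Matrix.transpose_mul, Matrix.transpose_transpose, hRsym, Matrix.mul_assoc]
    rw [hmat, Matrix.mul_apply]
    refine Finset.sum_congr rfl fun s _ => ?_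
    rw [Matrix.transpose_apply, ← sq]
    congr 1
  -- pointwise trace identity
  have htau : ∀ ω, tau n ((Xi ω - S) ^ 2)
      = (1/(n:ℝ)) * ((∑ i, (((V ω)ᵀ * Eout ω * V ω) i i) ^ 2)
          - 2 * ∑ i, ((V ω)ᵀ * Eout ω * V ω) i i * (((V ω)ᵀ * S * V ω) i i))
        + tau n (S * S) := by
    intro ω
    set v := V ω with hv
    set A := vᵀ * Eout ω * v with hA
    set D := diagPart n A with hD
    have hvv : vᵀ * v = 1 := hVorth ω
    have hXiω : Xi ω = v * D * vᵀ := hXi ω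
    have hsq : (Xi ω - S) ^ 2 = Xi ω * Xi ω - Xi ω * S - S * Xi ω + S * S := by
      rw [sq]
      noncomm_ring
    have hTr1 : (Xi ω * Xi ω).trace = ∑ i, (A i i) ^ 2 := by
      have e1 : Xi ω * Xi ω = v * (D * (D * vᵀ)) := by
        rw [hXiω]
        simp only [Matrix.mul_assoc]
        rw [← Matrix.mul_assoc vᵀ v, hvv, one_mul]
      have e2 : (D * (D * vᵀ)) * v = D * D := by
        simp only [Matrix.mul_assoc]
        rw [hvv, Matrix.mul_one]
      rw [e1, Matrix.trace_mul_comm, e2, hD]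
      show (Matrix.diagonal A.diag * Matrix.diagonal A.diag).trace = _
      rw [Matrix.diagonal_mul_diagonal, Matrix.trace_diagonal]
      exact Finset.sum_congr rfl fun i _ => by rw [sq]; rfl
    have hTr2 : (Xi ω * S).trace = ∑ i, A i i * ((vᵀ * S * v) i i) := by
      have e3 : Xi ω * S = v * (D * (vᵀ * S)) := by
        rw [hXiω]
        simp only [Matrix.mul_assoc]
      have e4 : (D * (vᵀ * S)) * v = D * (vᵀ * S * v) := by
        simp only [Matrix.mul_assoc]
      rw [e3, Matrix.trace_mul_comm, e4, hD]
      show (Matrix.diagonal A.diag * (vᵀ * S * v)).trace = _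
      rw [trace_diagonal_mul]
      exact Finset.sum_congr rfl fun i _ => rfl
    have hTr3 : (S * Xi ω).trace = (Xi ω * S).trace := Matrix.trace_mul_comm S (Xi ω)
    show (1/(n:ℝ)) * ((Xi ω - S) ^ 2).trace = _
    rw [hsq, Matrix.trace_add, Matrix.trace_sub, Matrix.trace_sub, hTr1, hTr3, hTr2]
    show _ = _ + (1/(n:ℝ)) * (S * S).trace
    ring
  -- key-lemma instances
  have hkp := fun (i : Fin n) (s s' : Fin tout) =>
    key_pair hn hξmeas hrot hcov hmom4 hindep hident hVmeas hVX hγ (F i) (hFmeas i)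
      K hK (hFb i) s s'
  have hkW := fun (i : Fin n) (s : Fin tout) =>
    key_W hξmeas hcov hmom4 hident hVmeas hVX (F i) (hFmeas i) K hK (hFb i) s
  have hFW : ∀ i : Fin n, (fun ω => (∑ j, (F i (V ω) j) ^ 2) ^ 2)
      = fun ω => (((V ω)ᵀ * S * V ω) i i) ^ 2 := fun i => funext fun ω => by rw [hW (V ω) i]
  -- value of ∫ (A i i)^2
  have hArw : ∀ i : Fin n, (fun ω => (((V ω)ᵀ * Eout ω * V ω) i i) ^ 2)
      = fun ω => ((tout:ℝ)⁻¹) ^ 2 * ∑ s, ∑ s', (∑ j, F i (V ω) j * X ω j s) ^ 2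
          * (∑ j, F i (V ω) j * X ω j s') ^ 2 := by
    intro i
    funext ω
    rw [hMA ω i, mul_pow]
    congr 1
    rw [sq, Finset.sum_mul_sum]
  have hAint : ∀ i : Fin n, Integrable (fun ω => (((V ω)ᵀ * Eout ω * V ω) i i) ^ 2) μ := by
    intro i
    rw [hArw i]
    exact (integrable_finset_sum _ fun s _ =>
      integrable_finset_sum _ fun s' _ => (hkp i s s').2).const_mul _
  have hAval : ∀ i : Fin n, ∫ ω, (((V ω)ᵀ * Eout ω * V ω) i i) ^ 2 ∂μ
      = (1 + (3*γ-1)/(tout:ℝ)) * ∫ ω, (((V ω)ᵀ * S * V ω) i i) ^ 2 ∂μ := by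
    intro i
    rw [hArw i, integral_const_mul, integral_sum2 (fun s s' => (hkp i s s').2),
      Finset.sum_congr rfl fun s _ => Finset.sum_congr rfl fun s' _ => (hkp i s s').1,
      hFW i]
    have hinner : ∀ s : Fin tout, (∑ s', (if s = s' then 3*γ else 1)
        * ∫ ω, (((V ω)ᵀ * S * V ω) i i) ^ 2 ∂μ)
        = ((tout:ℝ) + (3*γ - 1)) * ∫ ω, (((V ω)ᵀ * S * V ω) i i) ^ 2 ∂μ := by
      intro s
      rw [Finset.sum_congr rfl (fun s' _ => show (if s = s' then 3*γ else 1)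
          * (∫ ω, (((V ω)ᵀ * S * V ω) i i) ^ 2 ∂μ)
          = (∫ ω, (((V ω)ᵀ * S * V ω) i i) ^ 2 ∂μ)
            + (if s = s' then (3*γ-1) * ∫ ω, (((V ω)ᵀ * S * V ω) i i) ^ 2 ∂μ else 0) from by
        by_cases h : s = s' <;> simp [h] <;> ring), Finset.sum_add_distrib, Finset.sum_const,
        Finset.sum_ite_eq, if_pos (Finset.mem_univ s), Finset.card_univ, Fintype.card_fin,
        nsmul_eq_mul]
      ring
    rw [Finset.sum_congr rfl fun s _ => hinner s, Finset.sum_const, Finset.card_univ,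
      Fintype.card_fin, nsmul_eq_mul]
    field_simp
  -- value of ∫ (A i i) * (W i i)
  have hAWrw : ∀ i : Fin n, (fun ω => ((V ω)ᵀ * Eout ω * V ω) i i * (((V ω)ᵀ * S * V ω) i i))
      = fun ω => (tout:ℝ)⁻¹ * ∑ s, (∑ j, F i (V ω) j * X ω j s) ^ 2
          * (∑ j, (F i (V ω) j) ^ 2) := by
    intro i
    funext ω
    rw [hMA ω i, ← hW (V ω) i, mul_assoc]
    congr 1
    rw [Finset.sum_mul]
  have hAWint : ∀ i : Fin n, Integrable
      (fun ω => ((V ω)ᵀ * Eout ω * V ω) i i * (((V ω)ᵀ * S * V ω) i i)) μ := by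
    intro i
    rw [hAWrw i]
    exact (integrable_finset_sum _ fun s _ => (hkW i s).2).const_mul _
  have hAWval : ∀ i : Fin n, ∫ ω, ((V ω)ᵀ * Eout ω * V ω) i i * (((V ω)ᵀ * S * V ω) i i) ∂μ
      = ∫ ω, (((V ω)ᵀ * S * V ω) i i) ^ 2 ∂μ := by
    intro i
    rw [hAWrw i, integral_const_mul, integral_finset_sum _ (fun s _ => (hkW i s).2),
      Finset.sum_congr rfl fun s _ => (hkW i s).1, hFW i, Finset.sum_const,
      Finset.card_univ, Fintype.card_fin, nsmul_eq_mul]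
    field_simp
  -- integrability & value of the RHS integrand
  have hWabs : ∀ (i : Fin n) ω, |∑ j, (F i (V ω) j) ^ 2| ≤ (n : ℝ) * K ^ 2 := by
    intro i ω
    rw [abs_of_nonneg (Finset.sum_nonneg fun l _ => sq_nonneg _)]
    calc (∑ l, (F i (V ω) l) ^ 2) ≤ ∑ _l : Fin n, K ^ 2 := by
          refine Finset.sum_le_sum fun l _ => ?_
          rw [← sq_abs]
          exact pow_le_pow_left₀ (abs_nonneg _) (hFb i ω l) 2
      _ = (n : ℝ) * K ^ 2 := by
          rw [Finset.sum_const, Finset.card_univ, Fintype.card_fin, nsmul_eq_mul]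
  have hQint : ∀ i : Fin n, Integrable (fun ω => (((V ω)ᵀ * S * V ω) i i) ^ 2) μ := by
    intro i
    rw [← hFW i]
    refine bounded_integrable ?_ (((n:ℝ) * K ^ 2) ^ 2) ?_
    · exact ((Finset.measurable_sum _ fun j _ => (hFmeas i j).pow measurable_const).pow
        measurable_const).comp hVmeas
    · intro ω
      rw [abs_pow]
      exact pow_le_pow_left₀ (abs_nonneg _) (hWabs i ω) 2
  have hRHS : ∫ ω, tau n ((diagPart n ((V ω)ᵀ * S * V ω)) ^ 2) ∂μ
      = (1/(n:ℝ)) * ∑ i, ∫ ω, (((V ω)ᵀ * S * V ω) i i) ^ 2 ∂μ := by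
    have hpt : (fun ω => tau n ((diagPart n ((V ω)ᵀ * S * V ω)) ^ 2))
        = fun ω => (1/(n:ℝ)) * ∑ i, (((V ω)ᵀ * S * V ω) i i) ^ 2 := by
      funext ω
      show (1/(n:ℝ)) * ((diagPart n ((V ω)ᵀ * S * V ω)) ^ 2).trace = _
      rw [sq]
      show (1/(n:ℝ)) * ((Matrix.diagonal ((V ω)ᵀ * S * V ω).diag
        * Matrix.diagonal ((V ω)ᵀ * S * V ω).diag).trace) = _
      rw [Matrix.diagonal_mul_diagonal, Matrix.trace_diagonal]
      congr 1
      exact Finset.sum_congr rfl fun i _ => by rw [sq]; rfl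
    rw [hpt, integral_const_mul, integral_finset_sum _ fun i _ => hQint i]
  -- assemble
  have hLHSpt : (fun ω => tau n ((Xi ω - S) ^ 2))
      = fun ω => (1/(n:ℝ)) * ((∑ i, (((V ω)ᵀ * Eout ω * V ω) i i) ^ 2)
          - 2 * ∑ i, ((V ω)ᵀ * Eout ω * V ω) i i * (((V ω)ᵀ * S * V ω) i i))
        + tau n (S * S) := funext htau
  have hint1 : Integrable (fun ω => ∑ i, (((V ω)ᵀ * Eout ω * V ω) i i) ^ 2) μ :=
    integrable_finset_sum _ fun i _ => hAint i
  have hint2 : Integrable (fun ω => 2 * ∑ i, ((V ω)ᵀ * Eout ω * V ω) i i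
      * (((V ω)ᵀ * S * V ω) i i)) μ :=
    (integrable_finset_sum _ fun i _ => hAWint i).const_mul 2
  have hGint : Integrable (fun ω => (1/(n:ℝ)) * ((∑ i, (((V ω)ᵀ * Eout ω * V ω) i i) ^ 2)
      - 2 * ∑ i, ((V ω)ᵀ * Eout ω * V ω) i i * (((V ω)ᵀ * S * V ω) i i))) μ :=
    (hint1.sub hint2).const_mul _
  rw [hLHSpt, integral_add hGint (integrable_const _), integral_const, integral_const_mul,
    integral_sub hint1 hint2, integral_const_mul,
    integral_finset_sum _ (fun i _ => hAint i), integral_finset_sum _ (fun i _ => hAWint i),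
    Finset.sum_congr rfl (fun i _ => hAval i), Finset.sum_congr rfl (fun i _ => hAWval i),
    ← Finset.mul_sum, hRHS]
  simp only [measure_univ, ENNReal.toReal_one, smul_eq_mul, one_mul, probReal_univ]
  ring
end

section
/- Let n ≥ 1 and let E and Σ be random symmetric n×n real matrices (defined on a common probability space, with all the traces below integrable) satisfying E[τ(E)] = E[τ(Σ)] = 1, E[τ(EΣ)] = E[τ(Σ²)], and E[τ(E²)] > 1. Then the function r ↦ E[τ((rE + (1−r)Iₙ − Σ)²)] on ℝ attains its unique minimum at r* = (E[τ(Σ²)] − 1)/(E[τ(E²)] − 1). -/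
open MeasureTheory Matrix

lemma tau_expand (n : ℕ) (hn : 1 ≤ n) (r : ℝ) (A B : Matrix (Fin n) (Fin n) ℝ) :
    tau n ((r • A + (1 - r) • (1 : Matrix (Fin n) (Fin n) ℝ) - B) ^ 2)
      = r ^ 2 * tau n (A * A) + (2 * r * (1 - r)) * tau n A + (-2 * r) * tau n (A * B)
        + ((1 - r) ^ 2 + (-2 * (1 - r)) * tau n B + tau n (B * B)) := by
  have hn' : (n : ℝ) ≠ 0 := Nat.cast_ne_zero.2 (by omega)
  simp only [tau, sq, mul_sub, sub_mul, mul_add, add_mul, Matrix.smul_mul, Matrix.mul_smul,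
    one_mul, mul_one, trace_add, trace_sub, trace_smul, trace_one, smul_eq_mul,
    Matrix.trace_mul_comm B A, Fintype.card_fin]
  field_simp
  ring

/-- Optimal linear shrinkage: for random symmetric matrices `E, Σ` with integrable traces,
`E[τ(E)] = E[τ(Σ)] = 1`, `E[τ(EΣ)] = E[τ(Σ²)]` and `E[τ(E²)] > 1`, the function
`r ↦ E[τ((rE + (1−r)I − Σ)²)]` attains its unique minimum at
`r* = (E[τ(Σ²)] − 1)/(E[τ(E²)] − 1)`. -/
theorem stmt_11 {Ω : Type*} [MeasurableSpace Ω] (μ : Measure Ω) [IsProbabilityMeasure μ]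
    (n : ℕ) (hn : 1 ≤ n)
    (E S : Ω → Matrix (Fin n) (Fin n) ℝ)
    (hEsymm : ∀ ω, (E ω).IsSymm) (hSsymm : ∀ ω, (S ω).IsSymm)
    (hIntE : Integrable (fun ω => tau n (E ω)) μ)
    (hIntS : Integrable (fun ω => tau n (S ω)) μ)
    (hIntE2 : Integrable (fun ω => tau n (E ω * E ω)) μ)
    (hIntS2 : Integrable (fun ω => tau n (S ω * S ω)) μ)
    (hIntES : Integrable (fun ω => tau n (E ω * S ω)) μ)
    (hE1 : ∫ ω, tau n (E ω) ∂μ = 1) (hS1 : ∫ ω, tau n (S ω) ∂μ = 1)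
    (hES : ∫ ω, tau n (E ω * S ω) ∂μ = ∫ ω, tau n (S ω * S ω) ∂μ)
    (hE2 : 1 < ∫ ω, tau n (E ω * E ω) ∂μ)
    (rstar : ℝ)
    (hrstar : rstar =
      ((∫ ω, tau n (S ω * S ω) ∂μ) - 1) / ((∫ ω, tau n (E ω * E ω) ∂μ) - 1)) :
    ∀ r : ℝ, r ≠ rstar →
      ∫ ω, tau n ((rstar • E ω + (1 - rstar) • (1 : Matrix (Fin n) (Fin n) ℝ) - S ω) ^ 2) ∂μ <
        ∫ ω, tau n ((r • E ω + (1 - r) • (1 : Matrix (Fin n) (Fin n) ℝ) - S ω) ^ 2) ∂μ := by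
  intro r hr
  set e2 := ∫ ω, tau n (E ω * E ω) ∂μ with he2
  set s2 := ∫ ω, tau n (S ω * S ω) ∂μ with hs2
  have key : ∀ t : ℝ,
      (∫ ω, tau n ((t • E ω + (1 - t) • (1 : Matrix (Fin n) (Fin n) ℝ) - S ω) ^ 2) ∂μ)
        = t ^ 2 * e2 + (2 * t * (1 - t)) * 1 + (-2 * t) * s2
          + ((1 - t) ^ 2 + (-2 * (1 - t)) * 1 + s2) := by
    intro t
    have hcongr : (fun ω => tau n ((t • E ω + (1 - t) • (1 : Matrix (Fin n) (Fin n) ℝ) - S ω) ^ 2))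
        = fun ω => (t ^ 2 * tau n (E ω * E ω) + (2 * t * (1 - t)) * tau n (E ω)
            + (-2 * t) * tau n (E ω * S ω))
          + ((1 - t) ^ 2 + (-2 * (1 - t)) * tau n (S ω) + tau n (S ω * S ω)) := by
      funext ω
      rw [tau_expand n hn t (E ω) (S ω)]
    rw [hcongr]
    have h1 : Integrable (fun ω => t ^ 2 * tau n (E ω * E ω)) μ := hIntE2.const_mul _
    have h2 : Integrable (fun ω => (2 * t * (1 - t)) * tau n (E ω)) μ := hIntE.const_mul _
    have h3 : Integrable (fun ω => (-2 * t) * tau n (E ω * S ω)) μ := hIntES.const_mul _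
    have h4 : Integrable (fun ω => (-2 * (1 - t)) * tau n (S ω)) μ := hIntS.const_mul _
    have h12 : Integrable (fun ω => t ^ 2 * tau n (E ω * E ω)
        + 2 * t * (1 - t) * tau n (E ω)) μ := h1.add h2
    have h123 : Integrable (fun ω => t ^ 2 * tau n (E ω * E ω)
        + 2 * t * (1 - t) * tau n (E ω) + -2 * t * tau n (E ω * S ω)) μ := h12.add h3
    have h45 : Integrable (fun ω => (1 - t) ^ 2 + -2 * (1 - t) * tau n (S ω)) μ :=
      (integrable_const _).add h4
    have h456 : Integrable (fun ω => (1 - t) ^ 2 + -2 * (1 - t) * tau n (S ω)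
        + tau n (S ω * S ω)) μ := h45.add hIntS2
    rw [integral_add h123 h456, integral_add h12 h3, integral_add h1 h2,
      integral_add h45 hIntS2, integral_add (integrable_const ((1 - t) ^ 2)) h4,
      integral_const_mul, integral_const_mul, integral_const_mul, integral_const_mul,
      integral_const, hE1, hES, hS1]
    simp [measure_univ, he2, hs2]
  rw [key r, key rstar]
  have hd : 0 < e2 - 1 := by linarith
  have hr' : rstar * (e2 - 1) = s2 - 1 := by
    rw [hrstar]; field_simp
  have hsq : 0 < (r - rstar) ^ 2 := by
    have h0 : r - rstar ≠ 0 := sub_ne_zero.mpr hr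
    positivity
  have hkey : (r ^ 2 * e2 + 2 * r * (1 - r) * 1 + -2 * r * s2
        + ((1 - r) ^ 2 + -2 * (1 - r) * 1 + s2))
      - (rstar ^ 2 * e2 + 2 * rstar * (1 - rstar) * 1 + -2 * rstar * s2
        + ((1 - rstar) ^ 2 + -2 * (1 - rstar) * 1 + s2))
      = (e2 - 1) * (r - rstar) ^ 2 := by
    linear_combination (2 * (r - rstar)) * hr'
  nlinarith [mul_pos hd hsq, hkey]
end
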